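/- Let m ≥ 1, let f : ℝ^m → ℝ^m be C² and homogeneous of degree 5, let R > 0 and θ ∈ ℝ^m, and let u : (R, ∞) → ℝ^m be a C² solution of u''(r) + (2/r) u'(r) + f(u(r)) = 0 with lim_{r→∞} r·u(r) = θ. Then lim_{r→∞} r² u'(r) = −θ, and there exists R' ≥ R such that for all r ≥ R', u(r) = θ/r − ∫_r^∞ s^{−2} ( ∫_s^∞ ρ² f(u(ρ)) dρ ) ds (all the integrals converging absolutely). -/

import Mathlib

set_option maxHeartbeats 1000000


open Set Filter MeasureTheory

/-- Intermediate claim in Proposition 3.1: a solution with asymptotics `θ/r` has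
derivative asymptotics `−θ/r²` and satisfies the associated integral equation. -/
theorem stmt3 (m : ℕ) (hm : 1 ≤ m)
    (f : EuclideanSpace ℝ (Fin m) → EuclideanSpace ℝ (Fin m))
    (hf : ContDiff ℝ 2 f)
    (hhom : ∀ c : ℝ, 0 ≤ c → ∀ x, f (c • x) = c ^ 5 • f x)
    (R : ℝ) (hR : 0 < R) (θ : EuclideanSpace ℝ (Fin m))
    (u u' u'' : ℝ → EuclideanSpace ℝ (Fin m))
    (hud : ∀ r ∈ Ioi R, HasDerivAt u (u' r) r)
    (hud' : ∀ r ∈ Ioi R, HasDerivAt u' (u'' r) r)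
    (hu'' : ContinuousOn u'' (Ioi R))
    (huode : ∀ r ∈ Ioi R, u'' r + (2 / r) • u' r + f (u r) = 0)
    (hulim : Tendsto (fun r : ℝ => r • u r) atTop (nhds θ)) :
    Tendsto (fun r : ℝ => (r ^ 2) • u' r) atTop (nhds (-θ)) ∧
    ∃ R' : ℝ, R ≤ R' ∧
      (∀ s : ℝ, R' ≤ s → IntegrableOn (fun ρ : ℝ => (ρ ^ 2) • f (u ρ)) (Ioi s)) ∧
      (∀ r : ℝ, R' ≤ r →
        IntegrableOn
          (fun s : ℝ => (s ^ 2)⁻¹ • ∫ ρ in Ioi s, (ρ ^ 2) • f (u ρ)) (Ioi r) ∧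
        u r = r⁻¹ • θ -
          ∫ s in Ioi r, (s ^ 2)⁻¹ • ∫ ρ in Ioi s, (ρ ^ 2) • f (u ρ)) := by
  set g : ℝ → EuclideanSpace ℝ (Fin m) := fun ρ : ℝ => (ρ ^ 2) • f (u ρ) with hg
  set w : ℝ → EuclideanSpace ℝ (Fin m) := fun r : ℝ => (r ^ 2) • u' r with hwdef
  -- bound for f on a ball
  obtain ⟨C, hC⟩ := (isCompact_closedBall (0 : EuclideanSpace ℝ (Fin m))
    (‖θ‖ + 1)).exists_bound_of_continuousOn hf.continuous.continuousOn
  have hC0 : 0 ≤ C :=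
    le_trans (norm_nonneg _) (hC 0 (Metric.mem_closedBall_self (by positivity)))
  obtain ⟨R0, hR0⟩ := Metric.tendsto_atTop.mp hulim 1 one_pos
  set R' : ℝ := max (R + 1) (max R0 1) with hR'def
  have hRR' : R < R' := lt_of_lt_of_le (lt_add_one R) (le_max_left _ _)
  have hR'1 : (1 : ℝ) ≤ R' := le_trans (le_max_right R0 1) (le_max_right _ _)
  have hR'0 : (0 : ℝ) < R' := lt_of_lt_of_le one_pos hR'1
  have hR'R0 : R0 ≤ R' := le_trans (le_max_left R0 1) (le_max_right _ _)
  -- pointwise bound on f (u r)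
  have hfu : ∀ r : ℝ, R' ≤ r → ‖f (u r)‖ ≤ C * r ^ (-5 : ℝ) := by
    intro r hr
    have hr0 : (0 : ℝ) < r := hR'0.trans_le hr
    have h1 : f (u r) = (r⁻¹) ^ 5 • f (r • u r) := by
      have := hhom r⁻¹ (by positivity) (r • u r)
      rwa [smul_smul, inv_mul_cancel₀ hr0.ne', one_smul] at this
    have h2 : ‖f (r • u r)‖ ≤ C := by
      apply hC
      rw [Metric.mem_closedBall, dist_zero_right]
      have := hR0 r (hR'R0.trans hr)
      rw [dist_eq_norm] at this
      have h4 := norm_sub_norm_le (r • u r) θ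
      linarith
    have h3 : ‖(r⁻¹ : ℝ) ^ 5‖ = r ^ (-5 : ℝ) := by
      rw [Real.norm_eq_abs, abs_of_nonneg (by positivity), inv_pow,
        ← Real.rpow_natCast r 5, ← Real.rpow_neg hr0.le]
      norm_num
    calc ‖f (u r)‖ = ‖(r⁻¹ : ℝ) ^ 5‖ * ‖f (r • u r)‖ := by rw [h1, norm_smul]
      _ ≤ r ^ (-5 : ℝ) * C := by rw [h3]; exact mul_le_mul_of_nonneg_left h2 (by positivity)
      _ = C * r ^ (-5 : ℝ) := mul_comm _ _
  -- pointwise bound on g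
  have hgb : ∀ r : ℝ, R' ≤ r → ‖g r‖ ≤ C * r ^ (-3 : ℝ) := by
    intro r hr
    have hr0 : (0 : ℝ) < r := hR'0.trans_le hr
    calc ‖g r‖ = r ^ 2 * ‖f (u r)‖ := by
          rw [hg]; simp [norm_smul, abs_of_nonneg (sq_nonneg r)]
      _ ≤ r ^ 2 * (C * r ^ (-5 : ℝ)) :=
          mul_le_mul_of_nonneg_left (hfu r hr) (by positivity)
      _ = C * (r ^ ((2 : ℕ) : ℝ) * r ^ (-5 : ℝ)) := by
          rw [Real.rpow_natCast]; ring
      _ = C * r ^ (-3 : ℝ) := by rw [← Real.rpow_add hr0]; norm_num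
  -- continuity
  have hucont : ContinuousOn u (Ioi R) := fun r hr =>
    (hud r hr).continuousAt.continuousWithinAt
  have hu'cont : ContinuousOn u' (Ioi R) := fun r hr =>
    (hud' r hr).continuousAt.continuousWithinAt
  have hgcont : ContinuousOn g (Ioi R) :=
    (continuous_pow 2).continuousOn.smul (hf.continuous.comp_continuousOn hucont)
  -- integrability of g
  have hgint : ∀ s : ℝ, R' ≤ s → IntegrableOn g (Ioi s) := by
    intro s hs
    have hs0 : (0 : ℝ) < s := hR'0.trans_le hs
    refine Integrable.mono'
      ((integrableOn_Ioi_rpow_of_lt (by norm_num : (-3 : ℝ) < -1) hs0).const_mul C)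
      ((hgcont.mono (Ioi_subset_Ioi (hRR'.le.trans hs))).aestronglyMeasurable
        measurableSet_Ioi) ?_
    filter_upwards [ae_restrict_mem measurableSet_Ioi] with r hr
    exact hgb r (hs.trans hr.le)
  -- tail bound for ∫ g
  have htailb : ∀ s : ℝ, R' ≤ s → ‖∫ ρ in Ioi s, g ρ‖ ≤ C * s ^ (-2 : ℝ) := by
    intro s hs
    have hs0 : (0 : ℝ) < s := hR'0.trans_le hs
    have h1 : ‖∫ ρ in Ioi s, g ρ‖ ≤ ∫ ρ in Ioi s, C * ρ ^ (-3 : ℝ) := by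
      refine norm_integral_le_of_norm_le
        ((integrableOn_Ioi_rpow_of_lt (by norm_num : (-3 : ℝ) < -1) hs0).const_mul C) ?_
      filter_upwards [ae_restrict_mem measurableSet_Ioi] with r hr
      exact hgb r (hs.trans hr.le)
    have h2 : ∫ ρ in Ioi s, C * ρ ^ (-3 : ℝ) = C * (s ^ (-2 : ℝ) / 2) := by
      rw [integral_const_mul, integral_Ioi_rpow_of_lt (by norm_num : (-3 : ℝ) < -1) hs0]
      norm_num
    have h3 : (0 : ℝ) ≤ s ^ (-2 : ℝ) := Real.rpow_nonneg hs0.le _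
    calc ‖∫ ρ in Ioi s, g ρ‖ ≤ C * (s ^ (-2 : ℝ) / 2) := by rw [← h2]; exact h1
      _ ≤ C * s ^ (-2 : ℝ) := by nlinarith
  -- derivative of w
  have hwd : ∀ r ∈ Ioi R, HasDerivAt w (-(g r)) r := by
    intro r hr
    have hr0 : (0 : ℝ) < r := hR.trans hr
    have h1 : HasDerivAt (fun t : ℝ => t ^ 2) (2 * r) r := by
      simpa using hasDerivAt_pow 2 r
    have h2 : HasDerivAt w (r ^ 2 • u'' r + (2 * r) • u' r) r := h1.smul (hud' r hr)
    have h3 : u'' r = -((2 / r) • u' r) - f (u r) := by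
      have h := huode r hr
      have : u'' r + ((2 / r) • u' r + f (u r)) = 0 := by rw [← h]; abel
      rw [eq_neg_of_add_eq_zero_left this]; abel
    have hr2 : r ^ 2 * (2 / r) = 2 * r := by field_simp
    convert h2 using 1
    rw [h3, hg, smul_sub, smul_neg, smul_smul, hr2]
    abel
  -- limit of w
  have hwlim : Tendsto w atTop (nhds (limUnder atTop w)) :=
    tendsto_limUnder_of_hasDerivAt_of_integrableOn_Ioi
      (fun x hx => hwd x (Ioi_subset_Ioi hRR'.le hx)) ((hgint R' le_rfl).neg)
  set L : EuclideanSpace ℝ (Fin m) := limUnder atTop w with hLdef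
  -- w in terms of the tail integral
  have hwr : ∀ r : ℝ, R' ≤ r → w r = L + ∫ ρ in Ioi r, g ρ := by
    intro r hr
    have h := integral_Ioi_of_hasDerivAt_of_tendsto'
      (f := w) (f' := fun x => -(g x)) (a := r)
      (fun x hx => hwd x (lt_of_lt_of_le hRR' (hr.trans hx))) ((hgint r hr).neg) hwlim
    rw [integral_neg] at h
    have h2 : ∫ ρ in Ioi r, g ρ = w r - L := by
      rw [← neg_neg (∫ ρ in Ioi r, g ρ), h]; abel
    rw [h2]; abel
  -- formula for u'
  have hu'eq : ∀ s : ℝ, R' ≤ s →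
      u' s = ((s : ℝ) ^ 2)⁻¹ • L + ((s : ℝ) ^ 2)⁻¹ • ∫ ρ in Ioi s, g ρ := by
    intro s hs
    have hs0 : (0 : ℝ) < s := hR'0.trans_le hs
    have h := congrArg (fun v => ((s : ℝ) ^ 2)⁻¹ • v) (hwr s hs)
    simp only [hwdef, smul_smul, inv_mul_cancel₀ (pow_ne_zero 2 hs0.ne'), one_smul,
      smul_add] at h
    exact h
  -- rpow rewriting helper
  have hrpow2 : ∀ s : ℝ, 0 < s → ((s : ℝ) ^ 2)⁻¹ = s ^ (-2 : ℝ) := by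
    intro s hs0
    rw [← Real.rpow_natCast s 2, ← Real.rpow_neg hs0.le]
    norm_num
  -- norm bound for u'
  have hu'norm : ∀ s : ℝ, R' ≤ s → ‖u' s‖ ≤ (‖L‖ + C) * s ^ (-2 : ℝ) := by
    intro s hs
    have hs0 : (0 : ℝ) < s := hR'0.trans_le hs
    have hs1 : (1 : ℝ) ≤ s := hR'1.trans hs
    have htail := htailb s hs
    have hs2 : (0 : ℝ) ≤ s ^ (-2 : ℝ) := Real.rpow_nonneg hs0.le _
    have hsle1 : s ^ (-2 : ℝ) ≤ 1 :=
      Real.rpow_le_one_of_one_le_of_nonpos hs1 (by norm_num)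
    calc ‖u' s‖ ≤ ‖((s : ℝ) ^ 2)⁻¹ • L‖ + ‖((s : ℝ) ^ 2)⁻¹ • ∫ ρ in Ioi s, g ρ‖ := by
          rw [hu'eq s hs]; exact norm_add_le _ _
      _ = s ^ (-2 : ℝ) * ‖L‖ + s ^ (-2 : ℝ) * ‖∫ ρ in Ioi s, g ρ‖ := by
          rw [norm_smul, norm_smul, Real.norm_eq_abs, abs_of_nonneg (by positivity),
            hrpow2 s hs0]
      _ ≤ s ^ (-2 : ℝ) * ‖L‖ + s ^ (-2 : ℝ) * (C * s ^ (-2 : ℝ)) := by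
          have := mul_le_mul_of_nonneg_left htail hs2
          linarith
      _ ≤ (‖L‖ + C) * s ^ (-2 : ℝ) := by
          nlinarith [norm_nonneg L, mul_nonneg (mul_nonneg hC0 hs2) (sub_nonneg.mpr hsle1)]
  -- integrability of u'
  have hu'int : ∀ r : ℝ, R' ≤ r → IntegrableOn u' (Ioi r) := by
    intro r hr
    have hr0 : (0 : ℝ) < r := hR'0.trans_le hr
    refine Integrable.mono'
      ((integrableOn_Ioi_rpow_of_lt (by norm_num : (-2 : ℝ) < -1) hr0).const_mul (‖L‖ + C))
      ((hu'cont.mono (Ioi_subset_Ioi (hRR'.le.trans hr))).aestronglyMeasurable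
        measurableSet_Ioi) ?_
    filter_upwards [ae_restrict_mem measurableSet_Ioi] with s hs
    exact hu'norm s (hr.trans hs.le)
  -- u tends to 0
  have hu0 : Tendsto u atTop (nhds 0) := by
    have h1 : Tendsto (fun r : ℝ => r⁻¹ • (r • u r)) atTop
        (nhds ((0 : ℝ) • θ)) := tendsto_inv_atTop_zero.smul hulim
    rw [zero_smul] at h1
    refine h1.congr' ?_
    filter_upwards [eventually_gt_atTop (0 : ℝ)] with r hr
    rw [smul_smul, inv_mul_cancel₀ hr.ne', one_smul]
  -- u as an integral of u'
  have hueq : ∀ r : ℝ, R' ≤ r → u r = -∫ s in Ioi r, u' s := by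
    intro r hr
    have h := integral_Ioi_of_hasDerivAt_of_tendsto' (a := r)
      (fun x hx => hud x (lt_of_lt_of_le hRR' (hr.trans hx))) (hu'int r hr) hu0
    rw [h, zero_sub, neg_neg]
  -- integrability of the constant-term piece
  have hLint : ∀ r : ℝ, R' ≤ r →
      IntegrableOn (fun s : ℝ => ((s : ℝ) ^ 2)⁻¹ • L) (Ioi r) := by
    intro r hr
    have hr0 : (0 : ℝ) < r := hR'0.trans_le hr
    refine ((integrableOn_Ioi_rpow_of_lt (by norm_num : (-2 : ℝ) < -1)
      hr0).smul_const L).congr ?_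
    filter_upwards [ae_restrict_mem measurableSet_Ioi] with s hs
    rw [hrpow2 s (hr0.trans hs)]
  -- integrability of the tail piece T
  have hTint : ∀ r : ℝ, R' ≤ r →
      IntegrableOn (fun s : ℝ => ((s : ℝ) ^ 2)⁻¹ • ∫ ρ in Ioi s, g ρ) (Ioi r) := by
    intro r hr
    refine ((hu'int r hr).sub (hLint r hr)).congr ?_
    filter_upwards [ae_restrict_mem measurableSet_Ioi] with s hs
    simp only [Pi.sub_apply]
    rw [hu'eq s (hr.trans hs.le)]
    abel
  -- norm bound for T
  have hTb : ∀ s : ℝ, R' ≤ s →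
      ‖((s : ℝ) ^ 2)⁻¹ • ∫ ρ in Ioi s, g ρ‖ ≤ C * s ^ (-4 : ℝ) := by
    intro s hs
    have hs0 : (0 : ℝ) < s := hR'0.trans_le hs
    have hs2 : (0 : ℝ) ≤ s ^ (-2 : ℝ) := Real.rpow_nonneg hs0.le _
    calc ‖((s : ℝ) ^ 2)⁻¹ • ∫ ρ in Ioi s, g ρ‖
        = s ^ (-2 : ℝ) * ‖∫ ρ in Ioi s, g ρ‖ := by
          rw [norm_smul, Real.norm_eq_abs, abs_of_nonneg (by positivity), hrpow2 s hs0]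
      _ ≤ s ^ (-2 : ℝ) * (C * s ^ (-2 : ℝ)) :=
          mul_le_mul_of_nonneg_left (htailb s hs) hs2
      _ = C * (s ^ (-2 : ℝ) * s ^ (-2 : ℝ)) := by ring
      _ = C * s ^ (-4 : ℝ) := by rw [← Real.rpow_add hs0]; norm_num
  -- value of the constant-piece integral
  have hintL : ∀ r : ℝ, R' ≤ r →
      ∫ s in Ioi r, ((s : ℝ) ^ 2)⁻¹ • L = r⁻¹ • L := by
    intro r hr
    have hr0 : (0 : ℝ) < r := hR'0.trans_le hr
    rw [setIntegral_congr_fun measurableSet_Ioi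
      (g := fun s : ℝ => (s ^ (-2 : ℝ)) • L) (fun s hs => by rw [hrpow2 s (hr0.trans hs)]),
      integral_smul_const, integral_Ioi_rpow_of_lt (by norm_num : (-2 : ℝ) < -1) hr0]
    norm_num [Real.rpow_neg_one]
  -- decomposition of u
  have hudecomp : ∀ r : ℝ, R' ≤ r →
      u r = -(r⁻¹ • L) - ∫ s in Ioi r, ((s : ℝ) ^ 2)⁻¹ • ∫ ρ in Ioi s, g ρ := by
    intro r hr
    rw [hueq r hr]
    have hsplit : ∫ s in Ioi r, u' s =
        (∫ s in Ioi r, ((s : ℝ) ^ 2)⁻¹ • L) +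
          ∫ s in Ioi r, ((s : ℝ) ^ 2)⁻¹ • ∫ ρ in Ioi s, g ρ := by
      rw [← integral_add (hLint r hr) (hTint r hr)]
      exact setIntegral_congr_fun measurableSet_Ioi fun s hs => hu'eq s (hr.trans hs.le)
    rw [hsplit, hintL r hr]
    abel
  -- identification of L
  have htendL : Tendsto (fun r : ℝ => r • u r) atTop (nhds (-L)) := by
    have key : ∀ r : ℝ, R' ≤ r → ‖r • u r - (-L)‖ ≤ C * r ^ (-2 : ℝ) := by
      intro r hr
      have hr0 : (0 : ℝ) < r := hR'0.trans_le hr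
      have h1 : r • u r - (-L) =
          -(r • ∫ s in Ioi r, ((s : ℝ) ^ 2)⁻¹ • ∫ ρ in Ioi s, g ρ) := by
        rw [hudecomp r hr, smul_sub, smul_neg, smul_smul, mul_inv_cancel₀ hr0.ne',
          one_smul]
        abel
      rw [h1, norm_neg, norm_smul, Real.norm_eq_abs, abs_of_pos hr0]
      have h2 : ‖∫ s in Ioi r, ((s : ℝ) ^ 2)⁻¹ • ∫ ρ in Ioi s, g ρ‖ ≤
          ∫ s in Ioi r, C * s ^ (-4 : ℝ) := by
        refine norm_integral_le_of_norm_le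
          ((integrableOn_Ioi_rpow_of_lt (by norm_num : (-4 : ℝ) < -1) hr0).const_mul C) ?_
        filter_upwards [ae_restrict_mem measurableSet_Ioi] with s hs
        exact hTb s (hr.trans hs.le)
      have h3 : ∫ s in Ioi r, C * s ^ (-4 : ℝ) = C * (r ^ (-3 : ℝ) / 3) := by
        rw [integral_const_mul, integral_Ioi_rpow_of_lt (by norm_num : (-4 : ℝ) < -1) hr0]
        norm_num
      have hr3 : r * r ^ (-3 : ℝ) = r ^ (-2 : ℝ) := by
        nth_rewrite 1 [← Real.rpow_one r]
        rw [← Real.rpow_add hr0]; norm_num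
      have h4 : (0 : ℝ) ≤ r ^ (-2 : ℝ) := Real.rpow_nonneg hr0.le _
      calc r * ‖∫ s in Ioi r, ((s : ℝ) ^ 2)⁻¹ • ∫ ρ in Ioi s, g ρ‖
          ≤ r * (C * (r ^ (-3 : ℝ) / 3)) := by
            rw [← h3]; exact mul_le_mul_of_nonneg_left h2 hr0.le
        _ = C / 3 * (r * r ^ (-3 : ℝ)) := by ring
        _ = C / 3 * r ^ (-2 : ℝ) := by rw [hr3]
        _ ≤ C * r ^ (-2 : ℝ) := by nlinarith
    have h0 : Tendsto (fun r : ℝ => C * r ^ (-2 : ℝ)) atTop (nhds 0) := by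
      simpa using (tendsto_rpow_neg_atTop (by norm_num : (0 : ℝ) < 2)).const_mul C
    have hsq : Tendsto (fun r : ℝ => r • u r - (-L)) atTop (nhds 0) := by
      refine squeeze_zero_norm' ?_ h0
      filter_upwards [eventually_ge_atTop R'] with r hr using key r hr
    have := hsq.add_const (-L)
    simpa using this
  have hLθ : L = -θ := by
    have h := tendsto_nhds_unique hulim htendL
    rw [h, neg_neg]
  refine ⟨?_, R', hRR'.le, hgint, fun r hr => ⟨hTint r hr, ?_⟩⟩
  · rw [← hLθ]; exact hwlim
  · rw [hudecomp r hr, hLθ, smul_neg, neg_neg]
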